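/- There are no integers m ≥ 2, p ≥ 2, a, a′ with 0 ≤ a ≤ m, |a − a′| = 1, satisfying simultaneously (p − a)(2m + 2 − p − a) = −p(p − 1) and (p + 1 − a′)(2m + 1 − p − a′) = −p(p + 1). (This is Case 1, k = p and k′ = p+1, of the numerical analysis in the proof of the main theorem.) -/
import Mathlib


/-!
Statement 12: Case 1 (`k = p`, `k′ = p+1`) of the numerical analysis in the proof of
the main theorem has no solutions.
-/

theorem case_one_no_solutions :
    ¬ ∃ m p a a' : ℤ, 2 ≤ m ∧ 2 ≤ p ∧ 0 ≤ a ∧ a ≤ m ∧ |a - a'| = 1 ∧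
      (p - a) * (2 * m + 2 - p - a) = -(p * (p - 1)) ∧
      (p + 1 - a') * (2 * m + 1 - p - a') = -(p * (p + 1)) := by
  rintro ⟨m, p, a, a', hm, hp, ha0, ham, habs, h1, h2⟩
  rcases (abs_eq (by norm_num : (0:ℤ) ≤ 1)).mp habs with h | h
  · -- a' = a - 1
    have ha' : a' = a - 1 := by linarith
    subst ha'
    have hcomb : -2*a + 4*m + 4 = 0 := by linear_combination h2 - h1
    linarith
  · -- a' = a + 1
    have ha' : a' = a + 1 := by linarith
    subst ha'
    have h2a : 2*a = 0 := by linear_combination h2 - h1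
    have hcomb : a = 0 := by omega
    subst hcomb
    nlinarith [h1]
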